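/- For an n×n complex matrix A with positive definite Hermitian part (i.e., the quadratic form has positive real part), the Gaussian integral ∫ exp(-∑_{j,k} A_{jk} z_j z̄_k) ∏_j (dRe z_j dIm z_j / π) over ℂⁿ equals 1/det A. -/

import Mathlib

open scoped Real ComplexConjugate
open MeasureTheory Complex Matrix

/-- The quadratic form associated to a complex matrix. -/
noncomputable def QF {n : ℕ} (A : Matrix (Fin n) (Fin n) ℂ) (z : Fin n → ℂ) : ℂ :=
  ∑ j, ∑ k, A j k * z j * conj (z k)

lemma contQF {n : ℕ} (A : Matrix (Fin n) (Fin n) ℂ) : Continuous fun z : Fin n → ℂ => QF A z := by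
  unfold QF
  refine continuous_finset_sum _ fun j _ => continuous_finset_sum _ fun k _ => ?_
  exact (continuous_const.mul (continuous_apply j)).mul
    (Complex.continuous_conj.comp (continuous_apply k))

lemma gauss_one {a : ℂ} (ha : 0 < a.re) (u v : ℂ) :
    ∫ z : ℂ, Complex.exp (-(a * z * conj z + u * z + v * conj z))
      = ↑π / a * Complex.exp (u * v / a) := by
  have ha0 : a ≠ 0 := by intro h; rw [h] at ha; simp at ha
  have hre : (-a).re < 0 := by simpa using ha
  rw [← (Complex.volume_preserving_equiv_real_prod.symm
    Complex.measurableEquivRealProd).integral_comp'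
    (fun z : ℂ => Complex.exp (-(a * z * conj z + u * z + v * conj z)))]
  have key : ∀ p : ℝ × ℝ,
      Complex.exp (-(a * (Complex.measurableEquivRealProd.symm p) *
          conj (Complex.measurableEquivRealProd.symm p)
        + u * Complex.measurableEquivRealProd.symm p
        + v * conj (Complex.measurableEquivRealProd.symm p)))
      = Complex.exp (-a * (p.1:ℂ) ^ 2 + (-(u + v)) * (p.1:ℂ) + 0)
        * Complex.exp (-a * (p.2:ℂ) ^ 2 + (-(u - v) * I) * (p.2:ℂ) + 0) := by
    intro p
    rw [← Complex.exp_add]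
    congr 1
    simp only [Complex.measurableEquivRealProd_symm_apply]
    rw [show (⟨p.1, p.2⟩ : ℂ) = (p.1 : ℂ) + (p.2 : ℂ) * I from (Complex.mk_eq_add_mul_I _ _)]
    rw [show conj ((p.1:ℂ) + (p.2:ℂ) * I) = (p.1:ℂ) - (p.2:ℂ) * I by
      simp [Complex.ext_iff]]
    linear_combination (a * (p.2:ℂ)^2) * Complex.I_sq
  simp_rw [key]
  rw [MeasureTheory.Measure.volume_eq_prod,
    integral_prod_mul (f := fun x : ℝ => Complex.exp (-a * (x:ℂ) ^ 2 + (-(u + v)) * (x:ℂ) + 0))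
      (g := fun y : ℝ => Complex.exp (-a * (y:ℂ) ^ 2 + (-(u - v) * I) * (y:ℂ) + 0)),
    integral_cexp_quadratic hre _ _,
    integral_cexp_quadratic hre _ _, neg_neg, mul_mul_mul_comm,
    ← Complex.cpow_add _ _ (div_ne_zero (Complex.ofReal_ne_zero.mpr Real.pi_ne_zero) ha0),
    show (1/2 : ℂ) + 1/2 = 1 by norm_num, Complex.cpow_one, ← Complex.exp_add]
  congr 1
  have hI : (-(u - v) * I) ^ 2 = -((u - v) ^ 2) := by
    rw [mul_pow, Complex.I_sq]; ring
  rw [hI]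
  field_simp
  ring

lemma integrable_cgauss {δ : ℝ} (hδ : 0 < δ) :
    Integrable (fun w : ℂ => Real.exp (-δ * ‖w‖ ^ 2)) := by
  rw [← (Complex.volume_preserving_equiv_real_prod.symm
      Complex.measurableEquivRealProd).integrable_comp_emb
      (MeasurableEquiv.measurableEmbedding _)]
  have key : ((fun w : ℂ => Real.exp (-δ * ‖w‖ ^ 2)) ∘ Complex.measurableEquivRealProd.symm)
      = fun p : ℝ × ℝ => Real.exp (-δ * p.1 ^ 2) * Real.exp (-δ * p.2 ^ 2) := by
    funext p
    have : ‖(⟨p.1, p.2⟩ : ℂ)‖ ^ 2 = p.1 ^ 2 + p.2 ^ 2 := by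
      rw [Complex.sq_norm, Complex.normSq_mk]; ring
    simp only [Function.comp_apply, Complex.measurableEquivRealProd_symm_apply, this,
      ← Real.exp_add]
    ring_nf
  rw [key, MeasureTheory.Measure.volume_eq_prod]
  exact (integrable_exp_neg_mul_sq hδ).mul_prod (integrable_exp_neg_mul_sq hδ)

lemma integrableQF {n : ℕ} (A : Matrix (Fin (n + 1)) (Fin (n + 1)) ℂ)
    (hpos : ∀ z, z ≠ 0 → 0 < (QF A z).re) :
    Integrable (fun z : Fin (n + 1) → ℂ => Complex.exp (-QF A z)) := by
  obtain ⟨z₀, hz₀mem, hz₀min⟩ := (isCompact_sphere (0 : Fin (n + 1) → ℂ) 1).exists_isMinOn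
    (NormedSpace.sphere_nonempty.mpr zero_le_one)
    (Continuous.continuousOn (Complex.continuous_re.comp (contQF A)))
  have hz₀n : ‖z₀‖ = 1 := by simpa using hz₀mem
  have hz₀ : z₀ ≠ 0 := by
    intro h; rw [h] at hz₀n; simp at hz₀n
  set ε := (QF A z₀).re with hε
  have hεpos : 0 < ε := hpos z₀ hz₀
  have hscale : ∀ (r : ℝ) (z : Fin (n+1) → ℂ), QF A (r • z) = ((r : ℂ)) ^ 2 * QF A z := by
    intro r z
    simp only [QF, Finset.mul_sum]
    refine Finset.sum_congr rfl fun j _ => Finset.sum_congr rfl fun k _ => ?_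
    simp only [Pi.smul_apply, Complex.real_smul, _root_.map_mul, Complex.conj_ofReal]
    ring
  have hlow : ∀ z : Fin (n+1) → ℂ, ε * ‖z‖ ^ 2 ≤ (QF A z).re := by
    intro z
    rcases eq_or_ne z 0 with rfl | hz
    · simp [QF]
    · have hr : 0 < ‖z‖ := norm_pos_iff.mpr hz
      have hw : ‖(‖z‖⁻¹ • z)‖ = 1 := by
        rw [norm_smul, norm_inv, norm_norm, inv_mul_cancel₀ hr.ne']
      have hmin := hz₀min (by simpa [mem_sphere_iff_norm] using hw)
      have hzeq : z = ‖z‖ • (‖z‖⁻¹ • z) := by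
        rw [smul_smul, mul_inv_cancel₀ hr.ne', one_smul]
      calc ε * ‖z‖ ^ 2 ≤ (QF A (‖z‖⁻¹ • z)).re * ‖z‖ ^ 2 := by
            have : ε ≤ (QF A (‖z‖⁻¹ • z)).re := hmin
            nlinarith [sq_nonneg ‖z‖]
        _ = (QF A z).re := by
            conv_rhs => rw [hzeq, hscale]
            rw [show ((‖z‖ : ℂ)) ^ 2 = ((‖z‖ ^ 2 : ℝ) : ℂ) by push_cast; ring,
              Complex.re_ofReal_mul]
            ring
  set δ : ℝ := ε / (n + 1) with hδdef
  have hδ : 0 < δ := by positivity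
  have hsum : ∀ z : Fin (n+1) → ℂ, δ * ∑ j, ‖z j‖ ^ 2 ≤ (QF A z).re := by
    intro z
    refine le_trans ?_ (hlow z)
    have h1 : ∑ j, ‖z j‖ ^ 2 ≤ (n + 1) * ‖z‖ ^ 2 := by
      calc ∑ j, ‖z j‖ ^ 2 ≤ ∑ _j : Fin (n+1), ‖z‖ ^ 2 :=
            Finset.sum_le_sum fun j _ => by
              have := norm_le_pi_norm z j
              nlinarith [norm_nonneg (z j)]
        _ = (n + 1) * ‖z‖ ^ 2 := by simp [Finset.sum_const]
    rw [hδdef]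
    rw [div_mul_eq_mul_div, div_le_iff₀ (by positivity : (0:ℝ) < (n:ℝ) + 1)]
    nlinarith [hεpos]
  refine Integrable.mono (g := fun z : Fin (n+1) → ℂ => ∏ j, Real.exp (-δ * ‖z j‖ ^ 2))
    (Integrable.fintype_prod fun _ => integrable_cgauss hδ)
    ((Complex.continuous_exp.comp (contQF A).neg).aestronglyMeasurable) ?_
  filter_upwards with z
  rw [Complex.norm_exp, Real.norm_eq_abs,
    _root_.abs_of_nonneg (Finset.prod_nonneg fun j _ => (Real.exp_pos _).le), ← Real.exp_sum]
  apply Real.exp_le_exp.mpr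
  rw [Complex.neg_re]
  have := hsum z
  have h2 : ∑ j, -δ * ‖z j‖ ^ 2 = -(δ * ∑ j, ‖z j‖ ^ 2) := by
    simp [Finset.mul_sum]
  rw [h2]
  linarith

lemma det_schur_step {n : ℕ} (A : Matrix (Fin (n + 1)) (Fin (n + 1)) ℂ) (hA0 : A 0 0 ≠ 0) :
    A.det = A 0 0 *
      Matrix.det (Matrix.of fun i j : Fin n =>
        A i.succ j.succ - A i.succ 0 * A 0 j.succ / A 0 0) := by
  set L : Matrix (Fin (n + 1)) (Fin (n + 1)) ℂ :=
    Matrix.of fun i j => if i = j then 1 else if j = 0 then -(A i 0 / A 0 0) else 0 with hL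
  have hdetL : L.det = 1 := by
    have htri : L.BlockTriangular OrderDual.toDual := by
      intro i j hij
      have hij' : i < j := hij
      have h1 : i ≠ j := ne_of_lt hij'
      have h2 : j ≠ 0 := by
        intro h
        subst h
        exact Fin.not_lt_zero i hij'
      simp [hL, h1, h2]
    rw [Matrix.det_of_lowerTriangular L htri]
    simp [hL]
  have hM : ∀ j, (L * A) 0 j = A 0 j := by
    intro j
    rw [Matrix.mul_apply, Fin.sum_univ_succ]
    simp only [hL, Matrix.of_apply]
    rw [show (∑ x : Fin n, (if (0:Fin (n+1)) = x.succ then (1:ℂ) else if x.succ = 0 then -(A 0 0 / A 0 0) else 0) * A x.succ j) = 0 from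
      Finset.sum_eq_zero fun x _ => by
        rw [if_neg (Ne.symm (Fin.succ_ne_zero x)), if_neg (Fin.succ_ne_zero x), zero_mul],
      add_zero]
    simp
  have hM' : ∀ (i : Fin n) (j : Fin (n + 1)),
      (L * A) i.succ j = A i.succ j - A i.succ 0 * A 0 j / A 0 0 := by
    intro i j
    rw [Matrix.mul_apply, Fin.sum_univ_succ]
    simp only [hL, Matrix.of_apply]
    rw [if_neg (Fin.succ_ne_zero i), if_pos trivial]
    have key : ∀ k : Fin n,
        (if i.succ = k.succ then (1:ℂ) else if k.succ = 0 then -(A i.succ 0 / A 0 0) else 0)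
          * A k.succ j = if i = k then A k.succ j else 0 := by
      intro k
      rcases eq_or_ne i k with rfl | h
      · simp
      · simp [h, Fin.succ_ne_zero k, fun hc => h (Fin.succ_inj.mp hc)]
    rw [Finset.sum_congr rfl fun k _ => key k, Finset.sum_ite_eq]
    simp
    ring
  have h1 : A.det = (L * A).det := by rw [Matrix.det_mul, hdetL, one_mul]
  rw [h1, Matrix.det_succ_column_zero]
  rw [Finset.sum_eq_single 0]
  · rw [hM 0]
    simp only [Fin.val_zero, pow_zero, one_mul, Fin.succAbove_zero]
    have heq : (L * A).submatrix Fin.succ Fin.succ =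
        Matrix.of fun i j : Fin n => A i.succ j.succ - A i.succ 0 * A 0 j.succ / A 0 0 := by
      ext i j
      rw [Matrix.submatrix_apply, hM']
      simp
    rw [heq]
  · intro i _ hi
    obtain ⟨k, rfl⟩ := Fin.exists_succ_eq.mpr hi
    rw [hM' k 0, mul_div_assoc, div_self hA0, mul_one, sub_self, mul_zero, zero_mul]
  · intro h; exact absurd (Finset.mem_univ 0) h

lemma QF_cons {n : ℕ} (A : Matrix (Fin (n+1)) (Fin (n+1)) ℂ) (z0 : ℂ) (w : Fin n → ℂ) :
    QF A (Fin.cons z0 w) =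
      A 0 0 * z0 * conj z0 + (∑ k, A 0 k.succ * conj (w k)) * z0
        + (∑ j, A j.succ 0 * w j) * conj z0
        + ∑ j, ∑ k, A j.succ k.succ * w j * conj (w k) := by
  simp only [QF, Fin.sum_univ_succ, Fin.cons_zero, Fin.cons_succ]
  rw [Finset.sum_add_distrib]
  rw [show (∑ k, A 0 k.succ * z0 * conj (w k)) = (∑ k, A 0 k.succ * conj (w k)) * z0 by
    rw [Finset.sum_mul]; exact Finset.sum_congr rfl fun k _ => by ring]
  rw [show (∑ j, A j.succ 0 * w j * conj z0) = (∑ j, A j.succ 0 * w j) * conj z0 by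
    rw [Finset.sum_mul]]
  ring

lemma QF_schur {n : ℕ} (A : Matrix (Fin (n+1)) (Fin (n+1)) ℂ) (w : Fin n → ℂ) :
    QF (Matrix.of fun i j : Fin n => A i.succ j.succ - A i.succ 0 * A 0 j.succ / A 0 0) w
      = (∑ j, ∑ k, A j.succ k.succ * w j * conj (w k))
        - (∑ j, A j.succ 0 * w j) * (∑ k, A 0 k.succ * conj (w k)) / A 0 0 := by
  simp only [QF, Matrix.of_apply, sub_mul, Finset.sum_sub_distrib]
  congr 1
  rw [Finset.sum_mul, Finset.sum_div]
  refine Finset.sum_congr rfl fun j _ => ?_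
  rw [Finset.mul_sum, Finset.sum_div]
  refine Finset.sum_congr rfl fun k _ => ?_
  ring

lemma main_aux : ∀ (n : ℕ) (A : Matrix (Fin n) (Fin n) ℂ),
    (∀ z, z ≠ 0 → 0 < (QF A z).re) →
    (∫ z : Fin n → ℂ, Complex.exp (-QF A z)) = (π : ℂ) ^ n / A.det := by
  intro n
  induction n with
  | zero =>
      intro A _
      simp only [QF, Finset.univ_eq_empty, Finset.sum_empty, neg_zero, Complex.exp_zero]
      rw [MeasureTheory.volume_pi, MeasureTheory.integral_const]
      simp [Matrix.det_fin_zero, Measure.real, Measure.pi_of_empty]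
  | succ n IH =>
      intro A hpos
      have hA0re : 0 < (A 0 0).re := by
        have h := hpos (Fin.cons 1 0) (by
          intro h
          have := congrFun h 0
          simp at this)
        rw [QF_cons] at h
        simpa using h
      have hA0 : A 0 0 ≠ 0 := by
        intro h; rw [h] at hA0re; simp at hA0re
      set B : Matrix (Fin n) (Fin n) ℂ :=
        Matrix.of fun i j : Fin n => A i.succ j.succ - A i.succ 0 * A 0 j.succ / A 0 0 with hB
      have hBpos : ∀ w : Fin n → ℂ, w ≠ 0 → 0 < (QF B w).re := by
        intro w hw
        have hz : (Fin.cons (-(∑ j, A j.succ 0 * w j) / A 0 0) w : Fin (n+1) → ℂ) ≠ 0 := by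
          intro h
          apply hw
          funext i
          have := congrFun h i.succ
          simpa [Fin.cons_succ] using this
        have h := hpos _ hz
        have heq : QF A (Fin.cons (-(∑ j, A j.succ 0 * w j) / A 0 0) w) = QF B w := by
          rw [QF_cons, hB, QF_schur A w]
          generalize (starRingEnd ℂ) (-(∑ j, A j.succ 0 * w j) / A 0 0) = c
          field_simp
          ring
        rwa [heq] at h
      have hInt : Integrable (fun z : Fin (n+1) → ℂ => Complex.exp (-QF A z)) :=
        integrableQF A hpos
      have hInt2 : Integrable
          (fun p : ℂ × (Fin n → ℂ) => Complex.exp (-QF A (Fin.cons p.1 p.2)))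
          ((volume : Measure ℂ).prod (Measure.pi fun _ : Fin n => (volume : Measure ℂ))) := by
        have hmp := (measurePreserving_piFinSuccAbove
          (fun _ : Fin (n+1) => (volume : Measure ℂ)) 0).symm
        have hint' : Integrable (fun z : Fin (n+1) → ℂ => Complex.exp (-QF A z))
            (Measure.pi fun _ : Fin (n+1) => (volume : Measure ℂ)) := by
          rw [← MeasureTheory.volume_pi]; exact hInt
        have h2 := (hmp.integrable_comp_emb
          (MeasurableEquiv.measurableEmbedding _)).mpr hint'
        have hfun : ((fun z : Fin (n+1) → ℂ => Complex.exp (-QF A z)) ∘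
            (MeasurableEquiv.piFinSuccAbove (fun _ : Fin (n+1) => ℂ) 0).symm)
            = fun p : ℂ × (Fin n → ℂ) => Complex.exp (-QF A (Fin.cons p.1 p.2)) := by
          funext p
          simp only [Function.comp_apply, MeasurableEquiv.piFinSuccAbove_symm_apply,
            Fin.insertNthEquiv, Equiv.coe_fn_mk, Fin.insertNth_zero']
        rwa [hfun] at h2
      have hstep : (∫ z : Fin (n+1) → ℂ, Complex.exp (-QF A z))
          = ∫ w : Fin n → ℂ, ∫ z0 : ℂ, Complex.exp (-QF A (Fin.cons z0 w)) := by
        rw [MeasureTheory.volume_pi, ← ((measurePreserving_piFinSuccAbove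
          (fun _ : Fin (n+1) => (volume : Measure ℂ)) 0).symm).integral_comp'
          (fun z : Fin (n+1) → ℂ => Complex.exp (-QF A z))]
        simp_rw [MeasurableEquiv.piFinSuccAbove_symm_apply, Fin.insertNthEquiv,
          Equiv.coe_fn_mk, Fin.insertNth_zero']
        rw [MeasureTheory.integral_prod_symm _ hInt2]
        rw [← MeasureTheory.volume_pi]
      rw [hstep]
      have hinner : ∀ w : Fin n → ℂ,
          (∫ z0 : ℂ, Complex.exp (-QF A (Fin.cons z0 w)))
            = (π : ℂ) / A 0 0 * Complex.exp (-QF B w) := by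
        intro w
        have hsplit : ∀ z0 : ℂ, Complex.exp (-QF A (Fin.cons z0 w)) =
            Complex.exp (-(A 0 0 * z0 * conj z0 + (∑ k, A 0 k.succ * conj (w k)) * z0
              + (∑ j, A j.succ 0 * w j) * conj z0))
              * Complex.exp (-(∑ j, ∑ k, A j.succ k.succ * w j * conj (w k))) := by
          intro z0
          rw [← Complex.exp_add, QF_cons]
          congr 1
          ring
        simp_rw [hsplit]
        rw [MeasureTheory.integral_mul_const,
          gauss_one hA0re (∑ k, A 0 k.succ * conj (w k)) (∑ j, A j.succ 0 * w j)]
        rw [hB, QF_schur A w, mul_assoc, ← Complex.exp_add]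
        congr 2
        ring
      simp_rw [hinner]
      rw [MeasureTheory.integral_const_mul, IH B hBpos, det_schur_step A hA0, ← hB,
        div_mul_div_comm, ← pow_succ']

/-- Complex Gaussian integral: for an `n × n` complex matrix `A` whose Hermitian part is
positive definite, `∫ exp(-∑ A_{jk} z_j conj z_k) ∏ (dRe z_j dIm z_j / π) = 1 / det A`. -/
theorem complex_gaussian_integral {n : ℕ} (A : Matrix (Fin n) (Fin n) ℂ)
    (hpos : ∀ z : Fin n → ℂ, z ≠ 0 → 0 < (∑ j, ∑ k, A j k * z j * conj (z k)).re) :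
    ∫ z : Fin n → ℂ, Complex.exp (-∑ j, ∑ k, A j k * z j * conj (z k))
      = (π : ℂ) ^ n / A.det := by
  have h := main_aux n A hpos
  simpa only [QF] using h
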